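/- arXiv:2112.10923 — 2 statements merged into one kernel-verified Lean document; each statement's English description precedes it below -/
import Mathlib

section
/- (Combinatorial identity.) Let k ≥ 1 be a natural number and let 0 ≤ i ≤ k. Then ∑_{0 ≤ m ≤ min{i, k−i}, 1 ≤ n ≤ k−i} (−1)^n 2^{n−m} C(k+1, i−m) C(k, i+n) C(n−1, m) = (−1)^{k−i} C(k,i) − C(k,i)², where C(n,k) denotes the binomial coefficient. -/
open scoped BigOperators

open Finset Polynomial

noncomputable section CombIdentAux

def gker (a b : ℕ) : ℝ := (-1)^(a+b) * ((a+b).choose a : ℝ) / 2^(a+b)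

def mm (K L i j : ℕ) : ℝ :=
  ∑ a ∈ range (i+1), ∑ b ∈ range (j+1),
    gker a b * (K.choose (i-a) : ℝ) * (L.choose (j-b) : ℝ)

lemma gker_symm (a b : ℕ) : gker a b = gker b a := by
  unfold gker
  rw [add_comm b a, Nat.choose_symm_add]

lemma mm_symm (K L i j : ℕ) : mm K L i j = mm L K j i := by
  unfold mm
  rw [Finset.sum_comm]
  refine Finset.sum_congr rfl fun b _ => Finset.sum_congr rfl fun a _ => ?_
  rw [gker_symm]; ring

lemma gker_zero_zero : gker 0 0 = 1 := by norm_num [gker]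

lemma kernel_rec (a b : ℕ) :
    2 * gker a b + (if a = 0 then 0 else gker (a-1) b)
      + (if b = 0 then 0 else gker a (b-1)) =
    if a = 0 ∧ b = 0 then 2 else 0 := by
  match a, b with
  | 0, 0 => norm_num [gker]
  | a+1, 0 =>
      simp only [if_neg (Nat.succ_ne_zero a), if_pos rfl, Nat.add_sub_cancel,
        Nat.succ_ne_zero, false_and, if_false, if_true]
      unfold gker
      simp only [Nat.add_zero, Nat.choose_self, Nat.cast_one]
      rw [pow_succ]
      have : (2:ℝ)^a ≠ 0 := by positivity
      field_simp
      ring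
  | 0, b+1 =>
      simp only [if_pos rfl, if_neg (Nat.succ_ne_zero b), Nat.add_sub_cancel,
        Nat.succ_ne_zero, and_false, if_false, if_true]
      unfold gker
      simp only [Nat.zero_add, Nat.choose_zero_right, Nat.cast_one]
      rw [pow_succ]
      have : (2:ℝ)^b ≠ 0 := by positivity
      field_simp
      ring
  | a+1, b+1 =>
      simp only [if_neg (Nat.succ_ne_zero a), if_neg (Nat.succ_ne_zero b),
        Nat.add_sub_cancel, Nat.succ_ne_zero, false_and, if_false]
      unfold gker
      have h1 : a + 1 + (b + 1) = (a + (b+1)) + 1 := by omega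
      have h2 : a + 1 + b = a + (b+1) := by omega
      have hp : ((a + (b+1)) + 1).choose (a+1)
          = (a + (b+1)).choose a + (a + (b+1)).choose (a+1) :=
        Nat.choose_succ_succ _ _
      rw [h1, h2, hp]
      push_cast
      rw [pow_succ, pow_succ]
      have : (2:ℝ)^(a+(b+1)) ≠ 0 := by positivity
      field_simp
      ring


lemma shiftA (K L i j : ℕ) :
    (if i = 0 then (0:ℝ) else mm K L (i-1) j)
      = ∑ a ∈ range (i+1), ∑ b ∈ range (j+1),
          (if a = 0 then (0:ℝ) else gker (a-1) b) * (K.choose (i-a) : ℝ)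
            * (L.choose (j-b) : ℝ) := by
  rw [Finset.sum_range_succ']
  simp only [eq_self_iff_true, if_true, zero_mul, Finset.sum_const_zero, add_zero]
  cases i with
  | zero => simp
  | succ i' =>
      rw [if_neg (Nat.succ_ne_zero i'), Nat.succ_sub_one]
      unfold mm
      apply Finset.sum_congr rfl
      intro a _
      apply Finset.sum_congr rfl
      intro b _
      rw [if_neg (Nat.succ_ne_zero a), Nat.add_sub_cancel, Nat.succ_sub_succ]

lemma shiftB (K L i j : ℕ) :
    (if j = 0 then (0:ℝ) else mm K L i (j-1))
      = ∑ a ∈ range (i+1), ∑ b ∈ range (j+1),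
          (if b = 0 then (0:ℝ) else gker a (b-1)) * (K.choose (i-a) : ℝ)
            * (L.choose (j-b) : ℝ) := by
  rw [Finset.sum_comm]
  have h := shiftA L K j i
  rw [mm_symm] at h
  rw [h]
  apply Finset.sum_congr rfl
  intro b _
  apply Finset.sum_congr rfl
  intro a _
  rw [gker_symm]
  ring

lemma mKer (K L i j : ℕ) :
    2 * mm K L i j + (if i = 0 then (0:ℝ) else mm K L (i-1) j)
      + (if j = 0 then (0:ℝ) else mm K L i (j-1))
      = 2 * (K.choose i : ℝ) * (L.choose j : ℝ) := by
  rw [shiftA, shiftB, mm, Finset.mul_sum]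
  simp only [Finset.mul_sum]
  rw [← Finset.sum_add_distrib, ← Finset.sum_add_distrib]
  simp only [← Finset.sum_add_distrib]
  have step : (∑ a ∈ range (i+1), ∑ b ∈ range (j+1),
      ((2 * (gker a b * (K.choose (i-a) : ℝ) * (L.choose (j-b) : ℝ))
        + (if a = 0 then (0:ℝ) else gker (a-1) b) * (K.choose (i-a) : ℝ)
            * (L.choose (j-b) : ℝ))
        + (if b = 0 then (0:ℝ) else gker a (b-1)) * (K.choose (i-a) : ℝ)
            * (L.choose (j-b) : ℝ)))
      = ∑ a ∈ range (i+1), ∑ b ∈ range (j+1),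
          (if a = 0 ∧ b = 0 then (2:ℝ) else 0) * (K.choose (i-a) : ℝ)
            * (L.choose (j-b) : ℝ) := by
    apply Finset.sum_congr rfl
    intro a _
    apply Finset.sum_congr rfl
    intro b _
    rw [← kernel_rec a b]; ring
  rw [step]
  simp [Finset.sum_range_succ', Nat.succ_ne_zero]

lemma mPascal (K L i j : ℕ) :
    mm (K+1) L i j = mm K L i j + (if i = 0 then (0:ℝ) else mm K L (i-1) j) := by
  have hT : (if i = 0 then (0:ℝ) else mm K L (i-1) j)
      = ∑ a ∈ range (i+1), ∑ b ∈ range (j+1),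
          gker a b * (if a = i then (0:ℝ) else (K.choose (i-a-1) : ℝ))
            * (L.choose (j-b) : ℝ) := by
    rw [Finset.sum_range_succ]
    simp only [eq_self_iff_true, if_true, mul_zero, zero_mul, Finset.sum_const_zero, add_zero]
    cases i with
    | zero => simp
    | succ i' =>
        rw [if_neg (Nat.succ_ne_zero i'), Nat.succ_sub_one]
        unfold mm
        apply Finset.sum_congr rfl
        intro a ha
        apply Finset.sum_congr rfl
        intro b _
        have hai : a ≠ i' + 1 := Nat.ne_of_lt (Finset.mem_range.mp ha)
        have h2 : i' + 1 - a - 1 = i' - a := by omega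
        rw [if_neg hai, h2]
  rw [hT, mm, mm]
  rw [← Finset.sum_add_distrib]
  simp only [← Finset.sum_add_distrib]
  apply Finset.sum_congr rfl
  intro a ha
  apply Finset.sum_congr rfl
  intro b _
  have hcast : ((K+1).choose (i-a) : ℝ)
      = (K.choose (i-a) : ℝ) + (if a = i then (0:ℝ) else (K.choose (i-a-1) : ℝ)) := by
    by_cases hai : a = i
    · subst hai; simp
    · have hlt : a < i :=
        lt_of_le_of_ne (Nat.lt_succ_iff.mp (Finset.mem_range.mp ha)) hai
      rw [if_neg hai]
      have h1 : i - a = (i - a - 1) + 1 := by omega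
      rw [h1, Nat.choose_succ_succ]
      push_cast; ring
  rw [hcast]; ring

lemma mPascalL (K L i j : ℕ) :
    mm K (L+1) i j = mm K L i j + (if j = 0 then (0:ℝ) else mm K L i (j-1)) := by
  rw [mm_symm, mPascal, mm_symm L K]
  congr 1
  split_ifs with h
  · rfl
  · rw [mm_symm]

lemma mC (K L i j : ℕ) :
    mm (K+1) L i j + mm K (L+1) i j = 2 * (K.choose i : ℝ) * (L.choose j : ℝ) := by
  rw [mPascal, mPascalL]
  linarith [mKer K L i j]

lemma Bprime (k i : ℕ) : mm k (k+1) i i = (k.choose i : ℝ)^2 := by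
  have h1 := mC k k i i
  have h2 : mm (k+1) k i i = mm k (k+1) i i := mm_symm _ _ _ _
  rw [h2] at h1
  nlinarith [h1]

lemma mm00 (i j : ℕ) : mm 0 0 i j = gker i j := by
  unfold mm
  have hout : ∀ a ∈ range (i+1), a ≠ i →
      (∑ b ∈ range (j+1),
        gker a b * ((0:ℕ).choose (i-a) : ℝ) * ((0:ℕ).choose (j-b) : ℝ)) = 0 := by
    intro a ha ha'
    obtain ⟨s, hs⟩ : ∃ s, i - a = s + 1 :=
      ⟨i - a - 1, by have := Finset.mem_range.mp ha; omega⟩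
    rw [hs]
    simp
  rw [Finset.sum_eq_single_of_mem i (Finset.self_mem_range_succ i) hout]
  have hin : ∀ b ∈ range (j+1), b ≠ j →
      gker i b * ((0:ℕ).choose (i-i) : ℝ) * ((0:ℕ).choose (j-b) : ℝ) = 0 := by
    intro b hb hb'
    obtain ⟨s, hs⟩ : ∃ s, j - b = s + 1 :=
      ⟨j - b - 1, by have := Finset.mem_range.mp hb; omega⟩
    rw [hs]
    simp
  rw [Finset.sum_eq_single_of_mem j (Finset.self_mem_range_succ j) hin]
  simp

lemma mmK00 (K L : ℕ) : mm K L 0 0 = 1 := by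
  unfold mm
  simp [gker]

lemma gdiag (s : ℕ) : gker (s+1) (s+1) + gker s (s+1) = 0 := by
  unfold gker
  have h1 : (-1:ℝ)^(s+1+(s+1)) = 1 := Even.neg_one_pow ⟨s+1, by ring⟩
  have h2 : (-1:ℝ)^(s+(s+1)) = -1 := Odd.neg_one_pow ⟨s, by ring⟩
  rw [h1, h2]
  have hc : (s+1+(s+1)).choose (s+1) = (s+(s+1)).choose s + (s+(s+1)).choose (s+1) := by
    have h : s+1+(s+1) = (s+(s+1))+1 := by ring
    rw [h]
    exact Nat.choose_succ_succ _ _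
  have hsym : (s+(s+1)).choose (s+1) = (s+(s+1)).choose s := by
    have h : s+(s+1) = 2*s+1 := by ring
    rw [h]
    exact Nat.choose_symm_half s
  rw [hc, hsym]
  have h3 : s+1+(s+1) = (s+(s+1))+1 := by ring
  rw [h3, pow_succ]
  have h4 : (2:ℝ)^(s+(s+1)) ≠ 0 := by positivity
  push_cast
  field_simp
  ring

lemma lemA : ∀ k i, mm (2*k+1) 0 i i = (-1:ℝ)^i * (k.choose i : ℝ) := by
  intro k
  induction k with
  | zero =>
      intro i
      cases i with
      | zero => simpa using mmK00 1 0
      | succ s =>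
          have h1 : 2*0+1 = 0+1 := by ring
          rw [h1, mPascal 0 0 (s+1) (s+1), if_neg (Nat.succ_ne_zero s),
            Nat.succ_sub_one, mm00, mm00]
          rw [gdiag]
          simp
  | succ k ih =>
      intro i
      cases i with
      | zero =>
          rw [mmK00]
          simp
      | succ s =>
          have h1 : 2*(k+1)+1 = (2*k+1+1)+1 := by ring
          rw [h1]
          have e1 := mPascal (2*k+1+1) 0 (s+1) (s+1)
          rw [if_neg (Nat.succ_ne_zero s), Nat.succ_sub_one] at e1
          have e2 := mPascal (2*k+1) 0 (s+1) (s+1)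
          rw [if_neg (Nat.succ_ne_zero s), Nat.succ_sub_one] at e2
          have e3 := mPascal (2*k+1) 0 s (s+1)
          have e4 := mKer (2*k+1) 0 s (s+1)
          rw [if_neg (Nat.succ_ne_zero s), Nat.succ_sub_one] at e4
          have hz : ((0:ℕ).choose (s+1) : ℝ) = 0 := by simp
          rw [hz] at e4
          have ihs := ih s
          have ihs1 := ih (s+1)
          have hsgn : (-1:ℝ)^(s+1) = -(-1:ℝ)^s := by rw [pow_succ]; ring
          have hp : ((k+1).choose (s+1) : ℝ) = (k.choose s : ℝ) + (k.choose (s+1) : ℝ) := by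
            rw [Nat.choose_succ_succ]
            push_cast
            ring
          rw [e1, e2, e3, hp, hsgn]
          rw [hsgn] at ihs1
          linarith [e4, ihs, ihs1]

def kap : ℕ → ℕ → ℝ
  | 0, 0 => 1
  | 0, _+1 => 0
  | p+1, t => (-1)^t * ((p+t).choose t : ℝ) / 2^(p+1+t)

lemma kap_zz : kap 0 0 = 1 := rfl
lemma kap_zs (t : ℕ) : kap 0 (t+1) = 0 := rfl
lemma kap_succ_def (p t : ℕ) :
    kap (p+1) t = (-1)^t * ((p+t).choose t : ℝ) / 2^(p+1+t) := rfl

lemma kap_zero (p : ℕ) : kap p 0 = 2 * kap (p+1) 0 := by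
  cases p with
  | zero =>
      rw [kap_zz, kap_succ_def]
      norm_num
  | succ p' =>
      rw [kap_succ_def, kap_succ_def]
      simp only [Nat.add_zero, Nat.choose_zero_right, Nat.cast_one, pow_zero, one_mul]
      have h4 : (2:ℝ)^(p'+1) ≠ 0 := by positivity
      field_simp
      rw [pow_succ, pow_succ]

lemma kap_succ (p t : ℕ) : kap p (t+1) = 2 * kap (p+1) (t+1) + kap (p+1) t := by
  cases p with
  | zero =>
      rw [kap_zs, kap_succ_def, kap_succ_def]
      simp only [Nat.zero_add, Nat.choose_self, Nat.cast_one]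
      have c1 : (0:ℕ)+1+(t+1) = (0+1+t)+1 := by omega
      rw [c1, pow_succ (2:ℝ) (0+1+t)]
      have h4 : (2:ℝ)^(0+1+t) ≠ 0 := by positivity
      field_simp
      ring
  | succ p' =>
      rw [kap_succ_def, kap_succ_def, kap_succ_def]
      have c1 : p' + (t+1) = (p'+t)+1 := by omega
      rw [c1]
      have c2 : p' + 1 + (t+1) = ((p'+t)+1)+1 := by omega
      rw [c2]
      have c3 : p' + 1 + 1 + (t+1) = (((p'+t)+1)+1)+1 := by omega
      rw [c3]
      have c4 : p' + 1 + 1 + t = ((p'+t)+1)+1 := by omega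
      rw [c4]
      have c5 : p' + 1 + t = (p'+t)+1 := by omega
      rw [c5]
      rw [Nat.choose_succ_succ ((p'+t)+1) t]
      push_cast
      rw [pow_succ (2:ℝ) (((p'+t)+1)+1)]
      have h4 : (2:ℝ)^(((p'+t)+1)+1) ≠ 0 := by positivity
      field_simp
      ring


def Phi (p i : ℕ) (F : Polynomial ℝ) : ℝ :=
  ∑ t ∈ range (i+1), kap p t * F.coeff (i - t)

lemma Phi_zero (i : ℕ) (F : Polynomial ℝ) : Phi 0 i F = F.coeff i := by
  unfold Phi
  have hout : ∀ t ∈ range (i+1), t ≠ 0 → kap 0 t * F.coeff (i - t) = 0 := by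
    intro t _ ht
    obtain ⟨s, hs⟩ : ∃ s, t = s + 1 := ⟨t - 1, by omega⟩
    subst hs
    show (0:ℝ) * F.coeff (i - (s+1)) = 0
    rw [zero_mul]
  rw [Finset.sum_eq_single_of_mem 0 (Finset.mem_range.mpr (Nat.succ_pos i)) hout]
  show (1:ℝ) * F.coeff (i - 0) = F.coeff i
  rw [Nat.sub_zero, one_mul]

lemma Phi_S (p i : ℕ) (F : Polynomial ℝ) :
    Phi (p+1) i ((X + Polynomial.C 2) * F) = Phi p i F := by
  have hc : ∀ s : ℕ, ((X + Polynomial.C 2) * F).coeff s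
      = 2 * F.coeff s + (X * F).coeff s := by
    intro s
    rw [add_mul, Polynomial.coeff_add, Polynomial.coeff_C_mul]
    ring
  have hXF0 : (X * F).coeff 0 = 0 := by
    rw [Polynomial.mul_coeff_zero, Polynomial.coeff_X_zero, zero_mul]
  have e0 : Phi (p+1) i ((X + Polynomial.C 2) * F)
      = 2 * Phi (p+1) i F + ∑ t ∈ range (i+1), kap (p+1) t * (X*F).coeff (i-t) := by
    unfold Phi
    rw [Finset.mul_sum, ← Finset.sum_add_distrib]
    apply Finset.sum_congr rfl
    intro t _
    rw [hc]
    ring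
  have e1 : ∑ t ∈ range (i+1), kap (p+1) t * (X*F).coeff (i-t)
      = ∑ t ∈ range i, kap (p+1) t * F.coeff (i-(t+1)) := by
    rw [Finset.sum_range_succ, Nat.sub_self, hXF0, mul_zero, add_zero]
    apply Finset.sum_congr rfl
    intro t ht
    have h : i - t = (i - (t+1)) + 1 := by
      have := Finset.mem_range.mp ht; omega
    rw [h, Polynomial.coeff_X_mul]
  have e2 : Phi (p+1) i F
      = ∑ t ∈ range i, kap (p+1) (t+1) * F.coeff (i-(t+1)) + kap (p+1) 0 * F.coeff i := by
    unfold Phi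
    rw [Finset.sum_range_succ' (fun t => kap (p+1) t * F.coeff (i - t)) i, Nat.sub_zero]
  have e3 : Phi p i F
      = ∑ t ∈ range i, kap p (t+1) * F.coeff (i-(t+1)) + kap p 0 * F.coeff i := by
    unfold Phi
    rw [Finset.sum_range_succ' (fun t => kap p t * F.coeff (i - t)) i, Nat.sub_zero]
  have e4 : ∑ t ∈ range i, kap p (t+1) * F.coeff (i-(t+1))
      = (∑ t ∈ range i, 2 * (kap (p+1) (t+1) * F.coeff (i-(t+1))))
        + ∑ t ∈ range i, kap (p+1) t * F.coeff (i-(t+1)) := by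
    rw [← Finset.sum_add_distrib]
    apply Finset.sum_congr rfl
    intro t _
    rw [kap_succ]
    ring
  have e5 : ∑ t ∈ range i, 2 * (kap (p+1) (t+1) * F.coeff (i-(t+1)))
      = 2 * ∑ t ∈ range i, kap (p+1) (t+1) * F.coeff (i-(t+1)) := by
    rw [Finset.mul_sum]
  rw [e0, e1, e2, e3, e4, e5, kap_zero p]
  ring

lemma Phi_master (q : ℕ) : ∀ (p i : ℕ) (F : Polynomial ℝ),
    Phi (p+q) i ((X + Polynomial.C 2)^q * F) = Phi p i F := by
  induction q with
  | zero => intro p i F; simp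
  | succ q ih =>
      intro p i F
      have h1 : (X + Polynomial.C 2)^(q+1) * F
          = (X + Polynomial.C 2)^q * ((X + Polynomial.C 2) * F) := by
        ring
      have h2 : p + (q+1) = (p+1) + q := by omega
      rw [h1, h2, ih (p+1) i ((X + Polynomial.C 2) * F), Phi_S]

lemma Phi_collapse (i : ℕ) (F : Polynomial ℝ) :
    Phi (i+1) i ((X + Polynomial.C 2)^(i+1) * F) = F.coeff i := by
  have h := Phi_master (i+1) 0 i F
  rw [Nat.zero_add] at h
  rw [h, Phi_zero]

lemma mmRow (K i j : ℕ) :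
    mm K 0 i j = ∑ a ∈ range (i+1), gker a j * (K.choose (i-a) : ℝ) := by
  unfold mm
  apply Finset.sum_congr rfl
  intro a _
  have hin : ∀ b ∈ range (j+1), b ≠ j →
      gker a b * (K.choose (i-a) : ℝ) * ((0:ℕ).choose (j-b) : ℝ) = 0 := by
    intro b hb hb'
    obtain ⟨s, hs⟩ : ∃ s, j - b = s + 1 :=
      ⟨j - b - 1, by have := Finset.mem_range.mp hb; omega⟩
    rw [hs]
    simp
  rw [Finset.sum_eq_single_of_mem j (Finset.self_mem_range_succ j) hin]
  simp

lemma neg_one_sq_pow (a : ℕ) : ((-1:ℝ)^a)^2 = 1 := by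
  rw [← pow_mul, mul_comm, pow_mul]
  norm_num

lemma kap_gker (a t : ℕ) : kap (a+1) t = (-1:ℝ)^a * gker t a / 2 := by
  rw [kap_succ_def]
  unfold gker
  have h1 : (-1:ℝ)^a * (-1)^(t+a) = (-1)^t := by
    rw [pow_add]
    have h := neg_one_sq_pow a
    calc (-1:ℝ)^a * ((-1)^t * (-1)^a) = (-1)^t * ((-1)^a)^2 := by ring
    _ = (-1)^t := by rw [h, mul_one]
  have hc : a + t = t + a := by omega
  rw [hc]
  have h2 : a + 1 + t = (t+a)+1 := by omega
  rw [h2, pow_succ (2:ℝ) (t+a)]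
  have h4 : (2:ℝ)^(t+a) ≠ 0 := by positivity
  field_simp
  rw [← h1]
  ring

lemma bridge (K a i : ℕ) :
    Phi (a+1) i ((X+1)^K : Polynomial ℝ) = (-1:ℝ)^a/2 * mm K 0 i a := by
  rw [mmRow]
  unfold Phi
  rw [Finset.mul_sum]
  apply Finset.sum_congr rfl
  intro t _
  rw [Polynomial.coeff_X_add_one_pow ℝ K (i-t), kap_gker]
  ring

lemma bridgeA (k i : ℕ) :
    Phi (i+1) i ((X+1)^(2*k+1) : Polynomial ℝ) = (k.choose i : ℝ)/2 := by
  rw [bridge (2*k+1) i i, lemA k i]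
  have h := neg_one_sq_pow i
  calc (-1:ℝ)^i/2 * ((-1)^i * (k.choose i : ℝ))
      = ((-1:ℝ)^i)^2 * (k.choose i : ℝ) / 2 := by ring
  _ = (k.choose i : ℝ)/2 := by rw [h]; ring


def Rpoly (k i : ℕ) : Polynomial ℝ :=
  ∑ r ∈ range (i+1), Polynomial.C ((k.choose r : ℝ)) * (-(X + Polynomial.C 2))^r

lemma Phi_finsum {ι : Type*} (p i : ℕ) (s : Finset ι) (f : ι → Polynomial ℝ) :
    Phi p i (∑ r ∈ s, f r) = ∑ r ∈ s, Phi p i (f r) := by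
  unfold Phi
  simp only [Polynomial.finset_sum_coeff, Finset.mul_sum]
  rw [Finset.sum_comm]

lemma Phi_Cmul (p i : ℕ) (c : ℝ) (F : Polynomial ℝ) :
    Phi p i (Polynomial.C c * F) = c * Phi p i F := by
  unfold Phi
  rw [Finset.mul_sum]
  apply Finset.sum_congr rfl
  intro t _
  rw [Polynomial.coeff_C_mul]
  ring

lemma Phi_shift (i r : ℕ) (hr : r ≤ i) (G : Polynomial ℝ) :
    Phi (i+1) i ((X + Polynomial.C 2)^r * G) = Phi (i+1-r) i G := by
  have h : (i+1-r) + r = i+1 := by omega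
  have := Phi_master r (i+1-r) i G
  rw [h] at this
  exact this

lemma bridgeB (k i : ℕ) :
    Phi (i+1) i ((X+1)^(k+1) * Rpoly k i) = (-1:ℝ)^i * (k.choose i : ℝ)^2 / 2 := by
  unfold Rpoly
  rw [Finset.mul_sum, Phi_finsum]
  have e1 : ∀ r ∈ range (i+1),
      Phi (i+1) i ((X+1)^(k+1) * (Polynomial.C ((k.choose r : ℝ)) * (-(X + Polynomial.C 2))^r))
        = (k.choose r : ℝ) * ((-1:ℝ)^r * ((-1:ℝ)^(i-r)/2 * mm (k+1) 0 i (i-r))) := by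
    intro r hr
    have hrle : r ≤ i := Nat.lt_succ_iff.mp (Finset.mem_range.mp hr)
    have hpoly : ((X+1)^(k+1) * (Polynomial.C ((k.choose r : ℝ)) * (-(X + Polynomial.C 2))^r) : Polynomial ℝ)
        = Polynomial.C ((k.choose r : ℝ) * (-1:ℝ)^r) * ((X + Polynomial.C 2)^r * (X+1)^(k+1)) := by
      rw [neg_pow, Polynomial.C_mul]
      have hC : ((-1 : Polynomial ℝ))^r = Polynomial.C ((-1:ℝ)^r) := by
        rw [← Polynomial.C_1, ← Polynomial.C_neg, ← Polynomial.C_pow]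
      rw [hC]
      ring
    rw [hpoly, Phi_Cmul, Phi_shift i r hrle]
    have hir : i + 1 - r = (i - r) + 1 := by omega
    rw [hir, bridge (k+1) (i-r) i]
    ring
  rw [Finset.sum_congr rfl e1]
  have e2 : ∀ r ∈ range (i+1),
      (k.choose r : ℝ) * ((-1:ℝ)^r * ((-1:ℝ)^(i-r)/2 * mm (k+1) 0 i (i-r)))
        = (-1:ℝ)^i/2 * ((k.choose r : ℝ) * mm (k+1) 0 i (i-r)) := by
    intro r hr
    have hrle : r ≤ i := Nat.lt_succ_iff.mp (Finset.mem_range.mp hr)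
    have hsgn : (-1:ℝ)^r * (-1:ℝ)^(i-r) = (-1:ℝ)^i := by
      rw [← pow_add]
      congr 1
      omega
    calc (k.choose r : ℝ) * ((-1:ℝ)^r * ((-1:ℝ)^(i-r)/2 * mm (k+1) 0 i (i-r)))
        = ((-1:ℝ)^r * (-1:ℝ)^(i-r)) * ((k.choose r : ℝ) * mm (k+1) 0 i (i-r)) / 2 := by ring
      _ = (-1:ℝ)^i/2 * ((k.choose r : ℝ) * mm (k+1) 0 i (i-r)) := by rw [hsgn]; ring
  rw [Finset.sum_congr rfl e2, ← Finset.mul_sum]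
  have e3 : ∑ r ∈ range (i+1), (k.choose r : ℝ) * mm (k+1) 0 i (i-r)
      = ∑ a ∈ range (i+1), (k.choose (i-a) : ℝ) * mm (k+1) 0 i a := by
    rw [← Finset.sum_range_reflect]
    apply Finset.sum_congr rfl
    intro a ha
    have hale : a ≤ i := Nat.lt_succ_iff.mp (Finset.mem_range.mp ha)
    have h1 : i + 1 - 1 - a = i - a := by omega
    have h2 : i - (i - a) = a := by omega
    rw [h1, h2]
  have e4 : ∑ a ∈ range (i+1), (k.choose (i-a) : ℝ) * mm (k+1) 0 i a
      = mm k (k+1) i i := by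
    have h5 : ∑ a ∈ range (i+1), (k.choose (i-a) : ℝ) * mm (k+1) 0 i a
        = ∑ a ∈ range (i+1), ∑ t ∈ range (i+1),
            gker a t * (k.choose (i-a) : ℝ) * ((k+1).choose (i-t) : ℝ) := by
      apply Finset.sum_congr rfl
      intro a _
      rw [mmRow, Finset.mul_sum]
      apply Finset.sum_congr rfl
      intro t _
      rw [gker_symm]
      ring
    rw [h5]
    rfl
  rw [e3, e4, Bprime]
  ring

def Npoly (k i : ℕ) : Polynomial ℝ :=
  ∑ n ∈ Icc 1 (k-i),
    Polynomial.C ((-1:ℝ)^n * (k.choose (i+n) : ℝ)) * (X + Polynomial.C 2)^(n-1)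

lemma neg_one_sq_pow' (a : ℕ) : ((-1:ℝ)^a)^2 = 1 := by
  rw [← pow_mul, mul_comm, pow_mul]
  norm_num

lemma C_neg_pow (r : ℕ) : ((-1 : Polynomial ℝ))^r = Polynomial.C ((-1:ℝ)^r) := by
  rw [← Polynomial.C_1, ← Polynomial.C_neg, ← Polynomial.C_pow]

lemma step2 (k i : ℕ) (hik : i ≤ k) :
    (X + Polynomial.C 2)^(i+1) * Npoly k i
      = Polynomial.C ((-1:ℝ)^i)
          * (Polynomial.C ((-1:ℝ)^k) * (X+1)^k - Rpoly k i) := by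
  set f : ℕ → Polynomial ℝ :=
    fun r => Polynomial.C ((k.choose r : ℝ)) * (-(X + Polynomial.C 2))^r with hf
  -- LHS transformation
  have e1 : (X + Polynomial.C 2)^(i+1) * Npoly k i
      = Polynomial.C ((-1:ℝ)^i) * ∑ n ∈ Icc 1 (k-i), f (i+n) := by
    unfold Npoly
    rw [Finset.mul_sum, Finset.mul_sum]
    apply Finset.sum_congr rfl
    intro n hn
    have hn1 : 1 ≤ n := (Finset.mem_Icc.mp hn).1
    have hexp : (i+1) + (n-1) = i+n := by omega
    have hsgn : (-1:ℝ)^i * ((-1:ℝ)^(i+n) : ℝ) = (-1:ℝ)^n := by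
      rw [pow_add]
      have h := neg_one_sq_pow' i
      calc (-1:ℝ)^i * ((-1:ℝ)^i * (-1:ℝ)^n) = (-1:ℝ)^n * ((-1:ℝ)^i)^2 := by ring
        _ = (-1:ℝ)^n := by rw [h, mul_one]
    rw [hf]
    simp only []
    rw [neg_pow ((X : Polynomial ℝ) + Polynomial.C 2) (i+n), C_neg_pow]
    calc (X + Polynomial.C 2)^(i+1)
          * (Polynomial.C ((-1:ℝ)^n * (k.choose (i+n) : ℝ)) * (X + Polynomial.C 2)^(n-1))
        = Polynomial.C ((-1:ℝ)^n * (k.choose (i+n) : ℝ))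
            * ((X + Polynomial.C 2)^(i+1) * (X + Polynomial.C 2)^(n-1)) := by ring
      _ = Polynomial.C ((-1:ℝ)^n * (k.choose (i+n) : ℝ)) * (X + Polynomial.C 2)^(i+n) := by
          rw [← pow_add, hexp]
      _ = Polynomial.C ((-1:ℝ)^i) * (Polynomial.C ((k.choose (i+n) : ℝ))
            * (Polynomial.C ((-1:ℝ)^(i+n)) * (X + Polynomial.C 2)^(i+n))) := by
          rw [← hsgn, Polynomial.C_mul, Polynomial.C_mul]
          ring
  -- reindex
  have e2 : ∑ n ∈ Icc 1 (k-i), f (i+n) = ∑ r ∈ Icc (i+1) k, f r := by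
    have hmap : (Icc 1 (k-i)).map (addLeftEmbedding i) = Icc (i+1) k := by
      rw [Finset.map_add_left_Icc]
      congr 1
      omega
    rw [← hmap, Finset.sum_map]
    apply Finset.sum_congr rfl
    intro n _
    rfl
  -- split
  have e3 : ∑ r ∈ Icc (i+1) k, f r
      = ∑ r ∈ range (k+1), f r - ∑ r ∈ range (i+1), f r := by
    have h := Finset.sum_Ico_consecutive f
      (show 0 ≤ i+1 by omega) (show i+1 ≤ k+1 by omega)
    rw [← Finset.range_eq_Ico] at h
    rw [Finset.Ico_add_one_right_eq_Icc] at h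
    rw [← Finset.range_eq_Ico] at h
    linear_combination h
  -- binomial theorem
  have e4 : ∑ r ∈ range (k+1), f r = Polynomial.C ((-1:ℝ)^k) * (X+1)^k := by
    have hb := add_pow (-(X + Polynomial.C 2) : Polynomial ℝ) 1 k
    have hsummand : ∀ r ∈ range (k+1),
        (-(X + Polynomial.C 2) : Polynomial ℝ)^r * 1^(k-r) * (k.choose r : Polynomial ℝ)
          = f r := by
      intro r _
      rw [hf]
      simp only [one_pow, mul_one]
      rw [← Polynomial.C_eq_natCast]
      ring
    rw [Finset.sum_congr rfl hsummand] at hb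
    rw [← hb]
    have hbase : (-(X + Polynomial.C 2) + 1 : Polynomial ℝ) = -(X + 1) := by
      have h2 : (Polynomial.C (2:ℝ)) = 1 + 1 := by
        rw [show (2:ℝ) = 1+1 by norm_num, Polynomial.C_add, Polynomial.C_1]
      rw [h2]
      ring
    rw [hbase, neg_pow, C_neg_pow]
  -- Rpoly
  have e5 : ∑ r ∈ range (i+1), f r = Rpoly k i := rfl
  rw [e1, e2, e3, e4, e5]

lemma Phi_sub (p i : ℕ) (F G : Polynomial ℝ) :
    Phi p i (F - G) = Phi p i F - Phi p i G := by
  unfold Phi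
  rw [← Finset.sum_sub_distrib]
  apply Finset.sum_congr rfl
  intro t _
  rw [Polynomial.coeff_sub]
  ring

lemma step1 (k i : ℕ) (hik : i ≤ k) :
    (∑ m ∈ Finset.Icc 0 (min i (k - i)), ∑ n ∈ Finset.Icc 1 (k - i),
        (-1 : ℝ) ^ n * (2 : ℝ) ^ ((n : ℤ) - (m : ℤ)) *
          ((k + 1).choose (i - m)) * (k.choose (i + n)) * ((n - 1).choose m))
      = 2 * ((X+1)^(k+1) * Npoly k i).coeff i := by
  rw [Finset.sum_comm]
  have hIcc : Finset.Icc 0 (min i (k-i)) = range ((min i (k-i)) + 1) := by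
    rw [Finset.range_eq_Ico, Finset.Ico_add_one_right_eq_Icc]
  -- inner rewrite per n
  have inner : ∀ n ∈ Icc 1 (k-i),
      (∑ m ∈ Finset.Icc 0 (min i (k - i)),
        (-1 : ℝ) ^ n * (2 : ℝ) ^ ((n : ℤ) - (m : ℤ)) *
          ((k + 1).choose (i - m)) * (k.choose (i + n)) * ((n - 1).choose m))
      = (-1:ℝ)^n * (k.choose (i+n) : ℝ)
          * (2 * ((((X + Polynomial.C 2)^(n-1) * (X+1)^(k+1)) : Polynomial ℝ).coeff i)) := by
    intro n hn
    obtain ⟨hn1, hn2⟩ := Finset.mem_Icc.mp hn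
    rw [hIcc]
    -- extend to range (i+1)
    have hsub : range ((min i (k-i)) + 1) ⊆ range (i+1) := by
      apply Finset.range_subset_range.mpr
      omega
    have hzero : ∀ m ∈ range (i+1), m ∉ range ((min i (k-i)) + 1) →
        (-1 : ℝ) ^ n * (2 : ℝ) ^ ((n : ℤ) - (m : ℤ)) *
          ((k + 1).choose (i - m)) * (k.choose (i + n)) * ((n - 1).choose m) = 0 := by
      intro m hm hnm
      have h1 : min i (k-i) < m := by
        have := Finset.mem_range.mp hm
        by_contra hc
        exact hnm (Finset.mem_range.mpr (by omega))
      have h2 : m ≤ i := by have := Finset.mem_range.mp hm; omega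
      have h3 : n - 1 < m := by omega
      rw [Nat.choose_eq_zero_of_lt h3]
      push_cast
      ring
    rw [Finset.sum_subset hsub hzero]
    -- coeff_mul
    rw [Polynomial.coeff_mul]
    rw [Finset.Nat.sum_antidiagonal_eq_sum_range_succ_mk]
    rw [Finset.mul_sum, Finset.mul_sum]
    apply Finset.sum_congr rfl
    intro m hm
    have hmi : m ≤ i := by have := Finset.mem_range.mp hm; omega
    rw [Polynomial.coeff_X_add_C_pow, Polynomial.coeff_X_add_one_pow]
    by_cases hmn : m ≤ n - 1
    · have hz : (2:ℝ) ^ ((n : ℤ) - (m : ℤ)) = 2^(n - m) := by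
        have : (n : ℤ) - (m : ℤ) = ((n - m : ℕ) : ℤ) := by omega
        rw [this, zpow_natCast]
      rw [hz]
      have hpow : (2:ℝ)^(n-m) = 2 * 2^(n-1-m) := by
        have h : n - m = (n-1-m) + 1 := by omega
        rw [h, pow_succ]
        ring
      rw [hpow]
      push_cast
      ring
    · have h3 : n - 1 < m := by omega
      rw [Nat.choose_eq_zero_of_lt h3]
      push_cast
      ring
  rw [Finset.sum_congr rfl inner]
  -- now sum over n
  unfold Npoly
  rw [Finset.mul_sum, Polynomial.finset_sum_coeff, Finset.mul_sum]
  apply Finset.sum_congr rfl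
  intro n _
  have hswap : ((X+1)^(k+1) * (Polynomial.C ((-1:ℝ)^n * (k.choose (i+n) : ℝ))
        * (X + Polynomial.C 2)^(n-1)) : Polynomial ℝ)
      = Polynomial.C ((-1:ℝ)^n * (k.choose (i+n) : ℝ))
        * ((X + Polynomial.C 2)^(n-1) * (X+1)^(k+1)) := by ring
  rw [hswap, Polynomial.coeff_C_mul]
  ring

theorem combinatorial_identity
    (k : ℕ) (hk : 1 ≤ k) (i : ℕ) (hi : i ≤ k) :
    (∑ m ∈ Finset.Icc 0 (min i (k - i)), ∑ n ∈ Finset.Icc 1 (k - i),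
        (-1 : ℝ) ^ n * (2 : ℝ) ^ ((n : ℤ) - (m : ℤ)) *
          ((k + 1).choose (i - m)) * (k.choose (i + n)) * ((n - 1).choose m)) =
      (-1 : ℝ) ^ (k - i) * (k.choose i : ℝ) - (k.choose i : ℝ) ^ 2 := by
  rw [step1 k i hi]
  rw [← Phi_collapse i ((X+1)^(k+1) * Npoly k i)]
  have hassoc : ((X + Polynomial.C 2)^(i+1) * ((X+1)^(k+1) * Npoly k i) : Polynomial ℝ)
      = (X+1)^(k+1) * ((X + Polynomial.C 2)^(i+1) * Npoly k i) := by ring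
  rw [hassoc, step2 k i hi]
  have hdist : ((X+1)^(k+1) * (Polynomial.C ((-1:ℝ)^i)
      * (Polynomial.C ((-1:ℝ)^k) * (X+1)^k - Rpoly k i)) : Polynomial ℝ)
      = Polynomial.C ((-1:ℝ)^i)
          * (Polynomial.C ((-1:ℝ)^k) * (X+1)^(2*k+1) - (X+1)^(k+1) * Rpoly k i) := by
    have hp : ((X+1)^(k+1) * (X+1)^k : Polynomial ℝ) = (X+1)^(2*k+1) := by
      rw [← pow_add]
      congr 1
      omega
    calc ((X+1)^(k+1) * (Polynomial.C ((-1:ℝ)^i)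
        * (Polynomial.C ((-1:ℝ)^k) * (X+1)^k - Rpoly k i)) : Polynomial ℝ)
        = Polynomial.C ((-1:ℝ)^i) * (Polynomial.C ((-1:ℝ)^k)
            * ((X+1)^(k+1) * (X+1)^k) - (X+1)^(k+1) * Rpoly k i) := by ring
      _ = _ := by rw [hp]
  rw [hdist, Phi_Cmul]
  have hCk : Phi (i+1) i (Polynomial.C ((-1:ℝ)^k) * (X+1)^(2*k+1) - (X+1)^(k+1) * Rpoly k i)
      = (-1:ℝ)^k * ((k.choose i : ℝ)/2) - (-1:ℝ)^i * (k.choose i : ℝ)^2 / 2 := by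
    rw [Phi_sub, Phi_Cmul, bridgeA, bridgeB]
  rw [hCk]
  have hsq : ((-1:ℝ)^i)^2 = 1 := by
    rw [← pow_mul, mul_comm, pow_mul]
    norm_num
  have hsgn : (-1:ℝ)^i * (-1:ℝ)^k = (-1:ℝ)^(k-i) := by
    have h1 : i + k = (k-i) + 2*i := by omega
    rw [← pow_add, h1, pow_add, pow_mul]
    norm_num
  calc 2 * ((-1:ℝ)^i * ((-1:ℝ)^k * ((k.choose i : ℝ)/2)
        - (-1:ℝ)^i * (k.choose i : ℝ)^2 / 2))
      = ((-1:ℝ)^i * (-1:ℝ)^k) * (k.choose i : ℝ)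
        - ((-1:ℝ)^i)^2 * (k.choose i : ℝ)^2 := by ring
    _ = (-1 : ℝ) ^ (k - i) * (k.choose i : ℝ) - (k.choose i : ℝ) ^ 2 := by
        rw [hsq, hsgn]
        ring

end CombIdentAux
end

section
/- Let k ≥ 2 be a natural number. For every finitely supported function u : ℤ → ℂ with u(0) = 0, one has ∑_{n ∈ ℤ} |2u(n) − u(n+1) − u(n−1)|² n^{2k} ≥ k(k−1)(k − 3/2)² · ∑_{n ∈ ℤ} |u(n)|² n^{2k−4}. -/
open scoped BigOperators
open Function Real

noncomputable def wrW (k : ℕ) : ℤ → ℝ := fun m => ((((2*m+1)*(2*m+3)).toNat : ℕ) : ℝ)^k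
noncomputable def wrPhi (k : ℕ) : ℤ → ℝ := fun m => (((2*m+1).natAbs : ℝ)^(k-1))⁻¹
noncomputable def wrNu (k : ℕ) : ℤ → ℝ := fun m => ((m*(m+1) : ℤ) : ℝ)^(k-1)
noncomputable def wrPsi (k : ℕ) : ℤ → ℝ := fun n =>
  if n = 0 then 1 else (Real.sqrt (n.natAbs))^3 / ((n.natAbs : ℝ))^k
noncomputable def wrB2 (k : ℕ) : ℤ → ℝ := fun n =>
  if n = 0 then 0 else ((k:ℝ)-3/2)^2 * ((n:ℝ))^(2*k-4)

lemma wr_natAbs_cast (z : ℤ) : ((z.natAbs : ℕ) : ℝ) = |(z:ℝ)| := by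
  rw [Nat.cast_natAbs, Int.cast_abs]

lemma wr_E0 (y s : ℝ) (hs : 0 ≤ s) (hys : s ≤ y) (m : ℕ) :
    2*y^m ≤ (y+s)^m + (y-s)^m := by
  induction m with
  | zero => norm_num
  | succ m ih =>
    have h1 : (y-s)^m ≤ (y+s)^m := pow_le_pow_left₀ (by linarith) (by linarith) m
    have hy : 0 ≤ y := le_trans hs hys
    have h2 : y*(2*y^m) ≤ y*((y+s)^m + (y-s)^m) := mul_le_mul_of_nonneg_left ih hy
    have h3 : 0 ≤ s*((y+s)^m - (y-s)^m) := mul_nonneg hs (sub_nonneg.2 h1)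
    have eg : (y+s)^(m+1) + (y-s)^(m+1)
        = y*((y+s)^m + (y-s)^m) + s*((y+s)^m - (y-s)^m) := by ring
    have el : 2*y^(m+1) = y*(2*y^m) := by ring
    rw [eg, el]; linarith

lemma wr_O (y s : ℝ) (hs : 0 ≤ s) (hys : s ≤ y) (m : ℕ) :
    2*(m:ℝ)*s*y^m ≤ y*((y+s)^m - (y-s)^m) := by
  induction m with
  | zero => norm_num
  | succ m ih =>
    have hy : 0 ≤ y := le_trans hs hys
    have hE0 := wr_E0 y s hs hys m
    have h2 : y*(2*(m:ℝ)*s*y^m) ≤ y*(y*((y+s)^m - (y-s)^m)) :=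
      mul_le_mul_of_nonneg_left ih hy
    have h3 : (s*y)*(2*y^m) ≤ (s*y)*((y+s)^m + (y-s)^m) :=
      mul_le_mul_of_nonneg_left hE0 (mul_nonneg hs hy)
    have eg : y*((y+s)^(m+1) - (y-s)^(m+1))
        = y*(y*((y+s)^m - (y-s)^m)) + (s*y)*((y+s)^m + (y-s)^m) := by ring
    have el : 2*((m:ℕ)+1:ℝ)*s*y^(m+1) = y*(2*(m:ℝ)*s*y^m) + (s*y)*(2*y^m) := by ring
    push_cast
    push_cast at el
    rw [eg, el]; linarith

lemma wr_E2 (y s : ℝ) (hs : 0 ≤ s) (hys : s ≤ y) (m : ℕ) :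
    2*y^(m+2) + (m:ℝ)*((m:ℝ)-1)*s^2*y^m ≤ y^2*((y+s)^m + (y-s)^m) := by
  induction m with
  | zero => norm_num; nlinarith [sq_nonneg y]
  | succ m ih =>
    have hy : 0 ≤ y := le_trans hs hys
    have hO := wr_O y s hs hys m
    have h2 : y*(2*y^(m+2) + (m:ℝ)*((m:ℝ)-1)*s^2*y^m) ≤ y*(y^2*((y+s)^m + (y-s)^m)) :=
      mul_le_mul_of_nonneg_left ih hy
    have h3 : (s*y)*(2*(m:ℝ)*s*y^m) ≤ (s*y)*(y*((y+s)^m - (y-s)^m)) :=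
      mul_le_mul_of_nonneg_left hO (mul_nonneg hs hy)
    have eg : y^2*((y+s)^(m+1) + (y-s)^(m+1))
        = y*(y^2*((y+s)^m + (y-s)^m)) + (s*y)*(y*((y+s)^m - (y-s)^m)) := by ring
    have el : 2*y^(m+1+2) + ((m:ℕ)+1:ℝ)*(((m:ℕ)+1:ℝ)-1)*s^2*y^(m+1)
        = y*(2*y^(m+2) + (m:ℝ)*((m:ℝ)-1)*s^2*y^m) + (s*y)*(2*(m:ℝ)*s*y^m) := by
      push_cast; ring
    push_cast
    push_cast at el
    rw [eg, el]; linarith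

lemma wr_sqrt4 (x : ℝ) (hx : 1 ≤ x) :
    4*x*(Real.sqrt (x*(x+1)) + Real.sqrt (x*(x-1))) ≤ 8*x^2 - 1 := by
  have hx0 : (0:ℝ) ≤ x := by linarith
  set A := Real.sqrt (x*(x+1)) with hA
  set B := Real.sqrt (x*(x-1)) with hB
  have hA0 : 0 ≤ A := Real.sqrt_nonneg _
  have hB0 : 0 ≤ B := Real.sqrt_nonneg _
  have hA2 : A^2 = x*(x+1) := Real.sq_sqrt (by nlinarith)
  have hB2 : B^2 = x*(x-1) := Real.sq_sqrt (by nlinarith)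
  have hABsq : (A*B)^2 = (x*(x+1))*(x*(x-1)) := by rw [mul_pow, hA2, hB2]
  have hAB : A*B ≤ x^2 - 1/2 := by nlinarith [mul_nonneg hA0 hB0]
  have hsum : (A+B)^2 ≤ 4*x^2 - 1 := by nlinarith
  have h16 : (4*x*(A+B))^2 ≤ 16*x^2*(4*x^2-1) := by nlinarith [sq_nonneg x]
  nlinarith [mul_nonneg (mul_nonneg (by norm_num : (0:ℝ) ≤ 4) hx0) (add_nonneg hA0 hB0)]

-- MAIN2
lemma wr_main2 (j : ℕ) (x : ℝ) (hx : 1 ≤ x) :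
    4*x^(j+3)*(Real.sqrt (x*(x+1)) + Real.sqrt (x*(x-1))) + (2*(j:ℝ)+1)^2 * x^(j+2)
      ≤ 4*x^3*((x+1)^(j+1) + (x-1)^(j+1)) := by
  have hx0 : (0:ℝ) < x := by linarith
  have hE2 := wr_E2 x 1 (by norm_num) hx (j+1)
  -- x^2*((x+1)^(j+1)+(x-1)^(j+1)) ≥ 2*x^(j+3) + (j+1)*j*x^(j+1)
  have hs4 := wr_sqrt4 x hx
  have hxp : (0:ℝ) ≤ x^(j+2) := by positivity
  have h1 : x^(j+2) * (4*x*(Real.sqrt (x*(x+1)) + Real.sqrt (x*(x-1))))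
      ≤ x^(j+2) * (8*x^2-1) := mul_le_mul_of_nonneg_left hs4 hxp
  have h2 : (4*x) * (2*x^(j+1+2) + ((j:ℝ)+1)*(((j:ℝ)+1)-1)*1^2*x^(j+1))
      ≤ (4*x) * (x^2*((x+1)^(j+1) + (x-1)^(j+1))) := by
    apply mul_le_mul_of_nonneg_left _ (by linarith)
    push_cast at hE2 ⊢
    exact hE2
  have e1 : 4*x^(j+3)*(Real.sqrt (x*(x+1)) + Real.sqrt (x*(x-1)))
      = x^(j+2) * (4*x*(Real.sqrt (x*(x+1)) + Real.sqrt (x*(x-1)))) := by ring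
  have e2 : (4*x) * (x^2*((x+1)^(j+1) + (x-1)^(j+1))) = 4*x^3*((x+1)^(j+1) + (x-1)^(j+1)) := by
    ring
  have e3 : (4*x) * (2*x^(j+1+2) + ((j:ℝ)+1)*(((j:ℝ)+1)-1)*1^2*x^(j+1))
      = x^(j+2) * (8*x^2) + 4*(j:ℝ)*((j:ℝ)+1)*x^(j+2) := by ring
  nlinarith [h1, h2]

lemma wr_core1 (k : ℕ) (hk : 2 ≤ k) (b : ℝ) (hb : 3 ≤ b) :
    4^k * ((k:ℝ)*((k:ℝ)-1)) * ((b^2-1)/4)^(k-1) * ((b^(k-1))⁻¹) ≤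
      (b*(b+2))^k * ((b^(k-1))⁻¹ - ((b+2)^(k-1))⁻¹)
      + (b*(b-2))^k * ((b^(k-1))⁻¹ - ((b-2)^(k-1))⁻¹) := by
  obtain ⟨j, rfl⟩ : ∃ j, k = j + 2 := ⟨k - 2, by omega⟩
  have hb0 : (0:ℝ) < b := by linarith
  have hbp : (0:ℝ) < b + 2 := by linarith
  have hbm : (0:ℝ) < b - 2 := by linarith
  have hR : (b*(b+2))^(j+2) * ((b^(j+2-1))⁻¹ - ((b+2)^(j+2-1))⁻¹)
      + (b*(b-2))^(j+2) * ((b^(j+2-1))⁻¹ - ((b-2)^(j+2-1))⁻¹)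
      = b*((b+2)^(j+2) + (b-2)^(j+2)) - 2*b^(j+3) := by
    have e : j + 2 - 1 = j + 1 := rfl
    rw [e, mul_pow, mul_pow]
    field_simp
    ring
  rw [hR]
  have hL : 4^(j+2) * (((j:ℝ)+2)*(((j:ℝ)+2)-1)) * ((b^2-1)/4)^(j+2-1) * ((b^(j+2-1))⁻¹)
      = 4*(((j:ℝ)+2)*((j:ℝ)+1)) * (b^2-1)^(j+1) * ((b^(j+1))⁻¹) := by
    have e : j + 2 - 1 = j + 1 := rfl
    rw [e, div_pow]
    field_simp
    ring
  push_cast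
  push_cast at hL
  rw [hL]
  -- bound (b^2-1)^(j+1) ≤ (b^(j+1))^2
  have h1 : (b^2-1)^(j+1) ≤ (b^2)^(j+1) :=
    pow_le_pow_left₀ (by nlinarith) (by nlinarith) _
  have h2 : 4*(((j:ℝ)+2)*((j:ℝ)+1)) * (b^2-1)^(j+1) * ((b^(j+1))⁻¹)
      ≤ 4*(((j:ℝ)+2)*((j:ℝ)+1)) * b^(j+1) := by
    have e : (b^2)^(j+1) = b^(j+1) * b^(j+1) := by rw [← pow_mul]; ring_nf
    have hinv : (0:ℝ) < (b^(j+1))⁻¹ := by positivity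
    have := mul_le_mul_of_nonneg_right h1 hinv.le
    rw [e] at this
    calc 4*(((j:ℝ)+2)*((j:ℝ)+1)) * (b^2-1)^(j+1) * ((b^(j+1))⁻¹)
        = (4*(((j:ℝ)+2)*((j:ℝ)+1))) * ((b^2-1)^(j+1) * (b^(j+1))⁻¹) := by ring
      _ ≤ (4*(((j:ℝ)+2)*((j:ℝ)+1))) * (b^(j+1) * b^(j+1) * (b^(j+1))⁻¹) := by
          apply mul_le_mul_of_nonneg_left _ (by positivity)
          exact this
      _ = 4*(((j:ℝ)+2)*((j:ℝ)+1)) * b^(j+1) := by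
          field_simp
  refine le_trans h2 ?_
  -- from E2 with s = 2, m = j+2 : b^2*((b+2)^(j+2)+(b-2)^(j+2)) ≥ 2b^(j+4) + (j+2)(j+1)*4*b^(j+2)
  have hE2 := wr_E2 b 2 (by norm_num) (by linarith) (j+2)
  push_cast at hE2
  -- multiply target by b
  rw [← mul_le_mul_iff_right₀ hb0]
  have eg : b * (b*((b+2)^(j+2) + (b-2)^(j+2)) - 2*b^(j+3))
      = b^2*((b+2)^(j+2) + (b-2)^(j+2)) - 2*b^(j+2+2) := by ring
  have el : b * (4*(((j:ℝ)+2)*((j:ℝ)+1)) * b^(j+1)) = (((j:ℝ)+2)*(((j:ℝ)+2)-1))*2^2*b^(j+2) := by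
    ring
  rw [eg, el]
  linarith [hE2]

set_option maxHeartbeats 1000000 in
lemma wr_core2x (k : ℕ) (hk : 2 ≤ k) (x : ℝ) (hx : 1 ≤ x) :
    ((k:ℝ)-3/2)^2 * x^(2*k-4) * ((Real.sqrt x)^3 / x^k) ≤
      (x*(x+1))^(k-1) * ((Real.sqrt x)^3/x^k - (Real.sqrt (x+1))^3/(x+1)^k)
      + ((x-1)*x)^(k-1) * ((Real.sqrt x)^3/x^k - (Real.sqrt (x-1))^3/(x-1)^k) := by
  obtain ⟨j, rfl⟩ : ∃ j, k = j + 2 := ⟨k - 2, by omega⟩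
  have hx0 : (0:ℝ) < x := by linarith
  have hx1 : (0:ℝ) < x + 1 := by linarith
  have hxm : (0:ℝ) ≤ x - 1 := by linarith
  set a := Real.sqrt x with ha
  set bb := Real.sqrt (x+1) with hbb
  set c := Real.sqrt (x-1) with hc
  have ha0 : 0 ≤ a := Real.sqrt_nonneg _
  have hbb0 : 0 ≤ bb := Real.sqrt_nonneg _
  have hc0 : 0 ≤ c := Real.sqrt_nonneg _
  have ha2 : a^2 = x := Real.sq_sqrt hx0.le
  have hbb2 : bb^2 = x+1 := Real.sq_sqrt hx1.le
  have hc2 : c^2 = x-1 := Real.sq_sqrt hxm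
  have ha3 : a^3 = x*a := by rw [pow_succ, ha2]
  have hbb3 : bb^3 = (x+1)*bb := by rw [pow_succ, hbb2]
  have hc3 : c^3 = (x-1)*c := by rw [pow_succ, hc2]
  have hexp : 2*(j+2)-4 = 2*j := by omega
  have hexp2 : j+2-1 = j+1 := rfl
  -- collapse identity for RHS
  have hcollapse : (x*(x+1))^(j+1) * (a^3/x^(j+2) - bb^3/(x+1)^(j+2))
      + ((x-1)*x)^(j+1) * (a^3/x^(j+2) - c^3/(x-1)^(j+2))
      = a*((x+1)^(j+1) + (x-1)^(j+1)) - x^(j+1)*(bb + c) := by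
    rcases eq_or_lt_of_le hx with h1 | h1
    · -- x = 1
      have hc' : c = 0 := by rw [hc, ← h1]; simp
      have ha' : a = 1 := by rw [ha, ← h1]; simp
      have hbb3' : bb^3 = 2*bb := by rw [hbb3, ← h1]; norm_num
      rw [← h1, hc', ha']
      have h2p : (0:ℝ) < 2^(j+1) := by positivity
      have e2 : ((1:ℝ)+1)^(j+2) = 2^(j+1)*2 := by norm_num [pow_succ]
      norm_num [hbb3', e2]
      field_simp
      ring
    · -- x > 1
      have hxm0 : (0:ℝ) < x - 1 := by linarith
      rw [ha3, hbb3, hc3]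
      rw [mul_pow, mul_pow]
      field_simp
      ring
  have hgoal : ((j+2:ℕ):ℝ) - 3/2 = (j:ℝ) + 1/2 := by push_cast; ring
  rw [hexp, hexp2, hgoal, hcollapse]
  -- now multiply by 4x^3 and use main2
  have hmul : (0:ℝ) < 4*x^3 := by positivity
  rw [← mul_le_mul_iff_right₀ hmul]
  have hL : 4*x^3 * (((j:ℝ)+1/2)^2 * x^(2*j) * (a^3/x^(j+2)))
      = (2*(j:ℝ)+1)^2 * x^(j+2) * a := by
    rw [ha3]
    field_simp
    ring
  rw [hL]
  have hm := wr_main2 j x hx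
  have hma := mul_le_mul_of_nonneg_left hm ha0
  have hsab : Real.sqrt (x*(x+1)) = a*bb := Real.sqrt_mul hx0.le _
  have hsac : Real.sqrt (x*(x-1)) = a*c := Real.sqrt_mul hx0.le _
  rw [hsab, hsac] at hma
  have e1 : a * (4*x^(j+3)*(a*bb + a*c) + (2*(j:ℝ)+1)^2 * x^(j+2))
      = 4*x^(j+3)*x*(bb+c) + (2*(j:ℝ)+1)^2 * x^(j+2) * a := by
    have h4 : a*(a*bb) = x*bb := by rw [← mul_assoc, ← sq, ha2]
    have h5 : a*(a*c) = x*c := by rw [← mul_assoc, ← sq, ha2]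
    linear_combination 4*x^(j+3)*h4 + 4*x^(j+3)*h5
  have e2 : 4*x^3 * (a*((x+1)^(j+1) + (x-1)^(j+1)) - x^(j+1)*(bb + c))
      = a * (4*x^3*((x+1)^(j+1) + (x-1)^(j+1))) - 4*x^(j+3)*x*(bb+c) := by ring
  rw [e1] at hma
  rw [e2]
  linarith [hma]

-- pointwise algebraic identity
lemma wr_pt (w a b : ℝ) (x y : ℂ) :
    w * ‖(b:ℂ)*y - (a:ℂ)*x‖^2
      = w * (a*b) * ‖y - x‖^2 + w*b*(b-a)*‖y‖^2 - w*a*(b-a)*‖x‖^2 := by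
  have hn : ∀ z : ℂ, ‖z‖^2 = z.re^2 + z.im^2 := fun z => by
    rw [Complex.sq_norm, Complex.normSq_apply]; ring
  simp only [hn, Complex.sub_re, Complex.sub_im, Complex.mul_re, Complex.mul_im,
    Complex.ofReal_re, Complex.ofReal_im]
  ring

lemma wr_summable {F : ℤ → ℝ} (S : Set ℤ) (hS : S.Finite) (h : ∀ n, F n ≠ 0 → n ∈ S) :
    Summable F :=
  summable_of_ne_finset_zero (s := hS.toFinset)
    (fun a ha => by by_contra hca; exact ha (hS.mem_toFinset.mpr (h a hca)))

lemma wr_GSR (w φ B : ℤ → ℝ) (f : ℤ → ℂ) (hf : (support f).Finite)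
    (hw : ∀ n, 0 ≤ w n) (hφ : ∀ n, 0 < φ n)
    (hB : ∀ n, B n * φ n ≤ w n * (φ n - φ (n+1)) + w (n-1) * (φ n - φ (n-1))) :
    ∑' n, B n * ‖f n‖^2 ≤ ∑' n, w n * ‖f (n+1) - f n‖^2 := by
  set g : ℤ → ℂ := fun n => f n / (φ n : ℂ) with hg
  have hφn : ∀ n, ((φ n : ℝ) : ℂ) ≠ 0 := fun n => by
    exact_mod_cast (hφ n).ne'
  have hfg : ∀ n, f n = (φ n : ℂ) * g n := fun n =>
    (mul_div_cancel₀ (f n) (hφn n)).symm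
  have hgf : support g ⊆ support f := fun n hn => by
    simp only [mem_support, hg] at hn ⊢
    intro h0; exact hn (by rw [h0]; simp)
  have hgfin : (support g).Finite := hf.subset hgf
  have hg1fin : ((fun n : ℤ => n + 1) ⁻¹' (support g)).Finite :=
    Set.Finite.preimage (Set.injOn_of_injective (fun a b h => by omega)) hgfin
  set R : ℤ → ℝ := fun n => w n * (φ n * φ (n+1)) * ‖g (n+1) - g n‖^2 with hR
  set S : ℤ → ℝ := fun n => w n * φ (n+1) * (φ (n+1) - φ n) * ‖g (n+1)‖^2 with hS
  set T : ℤ → ℝ := fun n => w n * φ n * (φ (n+1) - φ n) * ‖g n‖^2 with hT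
  set F : ℤ → ℝ := fun n => w (n-1) * φ n * (φ n - φ (n-1)) * ‖g n‖^2 with hF
  have key : ∀ n, w n * ‖f (n+1) - f n‖^2 = R n + S n - T n := by
    intro n
    rw [hfg n, hfg (n+1)]
    have := wr_pt (w n) (φ n) (φ (n+1)) (g n) (g (n+1))
    simp only [hR, hS, hT]
    rw [this]
    try ring
  -- summabilities
  have hset : (support g ∪ (fun n : ℤ => n + 1) ⁻¹' (support g)).Finite :=
    hgfin.union hg1fin
  have memOf : ∀ n : ℤ, (g n ≠ 0 ∨ g (n+1) ≠ 0) →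
      n ∈ support g ∪ (fun n : ℤ => n + 1) ⁻¹' (support g) := by
    intro n hn
    rcases hn with h | h
    · exact Or.inl h
    · exact Or.inr h
  have sumR : Summable R := by
    apply wr_summable _ hset
    intro n hn
    apply memOf
    by_contra hc
    push_neg at hc
    exact hn (by simp [hR, hc.1, hc.2])
  have sumS : Summable S := by
    apply wr_summable _ hset
    intro n hn
    apply memOf
    by_contra hc
    push_neg at hc
    exact hn (by simp [hS, hc.2])
  have sumT : Summable T := by
    apply wr_summable _ hset
    intro n hn
    apply memOf
    by_contra hc
    push_neg at hc
    exact hn (by simp [hT, hc.1])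
  have sumF : Summable F := by
    apply wr_summable _ hset
    intro n hn
    apply memOf
    by_contra hc
    push_neg at hc
    exact hn (by simp [hF, hc.1])
  have sumB : Summable (fun n => B n * ‖f n‖^2) := by
    apply wr_summable _ hf
    intro n hn
    simp only [mem_support]
    intro h0
    exact hn (by simp [h0])
  -- reindex : ∑' S = ∑' F
  have hSF : ∑' n, S n = ∑' n, F n := by
    have : ∀ n : ℤ, S n = F (n+1) := by
      intro n
      simp only [hS, hF, add_sub_cancel_right]
    rw [tsum_congr this]
    exact (Equiv.addRight (1:ℤ)).tsum_eq F
  have main : ∑' n, w n * ‖f (n+1) - f n‖^2 = (∑' n, R n) + ((∑' n, F n) - (∑' n, T n)) := by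
    rw [tsum_congr key]
    rw [show (fun n => R n + S n - T n) = (fun n => R n + (S n - T n)) from funext (fun n => by ring)]
    rw [Summable.tsum_add sumR (sumS.sub sumT), Summable.tsum_sub sumS sumT, hSF]
  rw [main]
  have hRnn : 0 ≤ ∑' n, R n :=
    tsum_nonneg (fun n => by
      apply mul_nonneg
      apply mul_nonneg (hw n)
      exact (mul_nonneg (hφ n).le (hφ (n+1)).le)
      positivity)
  have hFT : ∑' n, (B n * ‖f n‖^2) ≤ (∑' n, F n) - (∑' n, T n) := by
    rw [← Summable.tsum_sub sumF sumT]
    apply Summable.tsum_le_tsum _ sumB (sumF.sub sumT)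
    intro n
    have hB' := hB n
    have hgn : ‖f n‖^2 = (φ n)^2 * ‖g n‖^2 := by
      rw [hfg n]
      rw [norm_mul]
      rw [Complex.norm_real, Real.norm_eq_abs, abs_of_pos (hφ n)]
      ring
    have e : F n - T n = (‖g n‖^2 * φ n) * (w n * (φ n - φ (n+1)) + w (n-1) * (φ n - φ (n-1))) := by
      simp only [hF, hT]; ring
    rw [e, hgn]
    have h1 : (‖g n‖^2 * φ n) * (B n * φ n) ≤ (‖g n‖^2 * φ n) * (w n * (φ n - φ (n+1)) + w (n-1) * (φ n - φ (n-1))) := by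
      apply mul_le_mul_of_nonneg_left hB'
      exact mul_nonneg (by positivity) (hφ n).le
    calc B n * ((φ n)^2 * ‖g n‖^2) = (‖g n‖^2 * φ n) * (B n * φ n) := by ring
      _ ≤ _ := h1
  linarith [hRnn, hFT]

lemma wr_phi_one (k : ℕ) (z : ℤ) (h : (2*z+1).natAbs = 1) : wrPhi k z = 1 := by
  simp [wrPhi, h]

lemma wr_phi_le_one (k : ℕ) (z : ℤ) : wrPhi k z ≤ 1 := by
  simp only [wrPhi]
  rcases Nat.eq_zero_or_pos (2*z+1).natAbs with h | h
  · exfalso; omega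
  · apply inv_le_one_of_one_le₀
    apply one_le_pow₀
    exact_mod_cast h

lemma wrW_eq (k : ℕ) (z : ℤ) (hz : 0 ≤ (2*z+1)*(2*z+3)) :
    wrW k z = (((2*z+1)*(2*z+3) : ℤ) : ℝ)^k := by
  simp only [wrW]
  congr 1
  exact_mod_cast congrArg (Int.cast : ℤ → ℝ) (Int.toNat_of_nonneg hz)

lemma wr_hB1 (k : ℕ) (hk : 2 ≤ k) (m : ℤ) :
    4^k * ((k:ℝ)*((k:ℝ)-1)) * wrNu k m * wrPhi k m ≤
      wrW k m * (wrPhi k m - wrPhi k (m+1)) + wrW k (m-1) * (wrPhi k m - wrPhi k (m-1)) := by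
  have hk1 : k - 1 ≠ 0 := by omega
  have hk0 : k ≠ 0 := by omega
  rcases lt_trichotomy m 0 with hm | hm | hm
  · rcases eq_or_lt_of_le (show m ≤ -1 by omega) with hm1 | hm1
    · -- m = -1
      subst hm1
      have e0 : wrNu k (-1) = 0 := by
        norm_num [wrNu, zero_pow hk1]
      have ew : wrW k (-1) = 0 := by
        show ((((2*(-1:ℤ)+1)*(2*(-1:ℤ)+3)).toNat : ℕ) : ℝ)^k = 0
        norm_num
        exact hk0
      have ew2 : wrW k (-1-1) = 3^k := by
        show ((((2*(-1-1:ℤ)+1)*(2*(-1-1:ℤ)+3)).toNat : ℕ) : ℝ)^k = 3^k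
        norm_num
        rw [show Int.toNat 3 = 3 from rfl]
        norm_num
      have ep0 : wrPhi k (-1) = 1 := wr_phi_one k (-1) (by norm_num)
      rw [e0, ew, ew2, ep0]
      have h1 : wrPhi k (-1-1) ≤ 1 := wr_phi_le_one k _
      have h2 : (0:ℝ) ≤ 3^k := by positivity
      nlinarith
    · -- m ≤ -2
      have hm2 : m ≤ -2 := by omega
      set b : ℝ := -(2*(m:ℝ)+1) with hbdef
      have hb : 3 ≤ b := by
        have : (m:ℝ) ≤ -2 := by exact_mod_cast hm2
        simp only [hbdef]; linarith
      have hmR : (m:ℝ) ≤ -2 := by exact_mod_cast hm2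
      have f1 : ((2*m+1).natAbs : ℝ) = b := by
        rw [wr_natAbs_cast]
        rw [abs_of_nonpos (by push_cast; linarith)]
        push_cast; simp only [hbdef]; try ring
      have f2 : ((2*(m+1)+1).natAbs : ℝ) = b - 2 := by
        rw [wr_natAbs_cast]
        rw [abs_of_nonpos (by push_cast; linarith)]
        push_cast; simp only [hbdef]; try ring
      have f3 : ((2*(m-1)+1).natAbs : ℝ) = b + 2 := by
        rw [wr_natAbs_cast]
        rw [abs_of_nonpos (by push_cast; linarith)]
        push_cast; simp only [hbdef]; try ring
      have f4 : wrW k m = (b*(b-2))^k := by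
        rw [wrW_eq k m (by nlinarith [sq_nonneg (2*m+2)] )]
        congr 1
        push_cast; simp only [hbdef]; try ring
      have f5 : wrW k (m-1) = (b*(b+2))^k := by
        rw [wrW_eq k (m-1) (by nlinarith [sq_nonneg (2*m)])]
        congr 1
        push_cast; simp only [hbdef]; try ring
      have f6 : wrNu k m = ((b^2-1)/4)^(k-1) := by
        simp only [wrNu]
        congr 1
        push_cast; simp only [hbdef]; try ring
      have p1 : wrPhi k m = (b^(k-1))⁻¹ := by simp only [wrPhi]; rw [f1]
      have p2 : wrPhi k (m+1) = ((b-2)^(k-1))⁻¹ := by simp only [wrPhi]; rw [f2]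
      have p3 : wrPhi k (m-1) = ((b+2)^(k-1))⁻¹ := by simp only [wrPhi]; rw [f3]
      rw [p1, p2, p3, f4, f5, f6, add_comm]
      exact wr_core1 k hk b hb
  · -- m = 0
    subst hm
    have e0 : wrNu k 0 = 0 := by norm_num [wrNu, zero_pow hk1]
    have ew : wrW k (0-1) = 0 := by
      show ((((2*((0:ℤ)-1)+1)*(2*((0:ℤ)-1)+3)).toNat : ℕ) : ℝ)^k = 0
      norm_num
      exact hk0
    have ew0 : wrW k 0 = 3^k := by
      show ((((2*(0:ℤ)+1)*(2*(0:ℤ)+3)).toNat : ℕ) : ℝ)^k = 3^k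
      norm_num
      rw [show Int.toNat 3 = 3 from rfl]
      norm_num
    have ep0 : wrPhi k 0 = 1 := wr_phi_one k 0 (by norm_num)
    rw [e0, ew, ew0, ep0]
    have h1 : wrPhi k (0+1) ≤ 1 := wr_phi_le_one k _
    have h2 : (0:ℝ) ≤ 3^k := by positivity
    nlinarith
  · -- m ≥ 1
    have hm2 : 1 ≤ m := hm
    have hmR : (1:ℝ) ≤ (m:ℝ) := by exact_mod_cast hm2
    set b : ℝ := 2*(m:ℝ)+1 with hbdef
    have hb : 3 ≤ b := by simp only [hbdef]; linarith
    have f1 : ((2*m+1).natAbs : ℝ) = b := by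
      rw [wr_natAbs_cast]
      rw [abs_of_nonneg (by push_cast; linarith)]
      push_cast; simp only [hbdef]; try ring
    have f2 : ((2*(m+1)+1).natAbs : ℝ) = b + 2 := by
      rw [wr_natAbs_cast]
      rw [abs_of_nonneg (by push_cast; linarith)]
      push_cast; simp only [hbdef]; try ring
    have f3 : ((2*(m-1)+1).natAbs : ℝ) = b - 2 := by
      rw [wr_natAbs_cast]
      rw [abs_of_nonneg (by push_cast; linarith)]
      push_cast; simp only [hbdef]; try ring
    have f4 : wrW k m = (b*(b+2))^k := by
      rw [wrW_eq k m (by nlinarith [sq_nonneg (2*m+2)])]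
      congr 1
      push_cast; simp only [hbdef]; try ring
    have f5 : wrW k (m-1) = (b*(b-2))^k := by
      rw [wrW_eq k (m-1) (by nlinarith [sq_nonneg (2*m)])]
      congr 1
      push_cast; simp only [hbdef]; try ring
    have f6 : wrNu k m = ((b^2-1)/4)^(k-1) := by
      simp only [wrNu]
      congr 1
      push_cast; simp only [hbdef]; try ring
    have p1 : wrPhi k m = (b^(k-1))⁻¹ := by simp only [wrPhi]; rw [f1]
    have p2 : wrPhi k (m+1) = ((b+2)^(k-1))⁻¹ := by simp only [wrPhi]; rw [f2]
    have p3 : wrPhi k (m-1) = ((b-2)^(k-1))⁻¹ := by simp only [wrPhi]; rw [f3]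
    rw [p1, p2, p3, f4, f5, f6]
    exact wr_core1 k hk b hb

lemma wr_hB2 (k : ℕ) (hk : 2 ≤ k) (n : ℤ) :
    wrB2 k n * wrPsi k n ≤
      wrNu k n * (wrPsi k n - wrPsi k (n+1)) + wrNu k (n-1) * (wrPsi k n - wrPsi k (n-1)) := by
  have hk1 : k - 1 ≠ 0 := by omega
  rcases lt_trichotomy n 0 with hn | hn | hn
  · -- n ≤ -1
    have hn1 : n ≤ -1 := by omega
    have hnR : (n:ℝ) ≤ -1 := by exact_mod_cast hn1
    set x : ℝ := -(n:ℝ) with hxdef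
    have hx : 1 ≤ x := by simp only [hxdef]; linarith
    have hcast : ((n.natAbs : ℕ) : ℝ) = x := by
      rw [wr_natAbs_cast, abs_of_nonpos (by linarith)]
    have g1 : wrPsi k n = (Real.sqrt x)^3 / x^k := by
      simp only [wrPsi, if_neg (show n ≠ 0 by omega)]
      rw [hcast]
    have g5 : wrB2 k n = ((k:ℝ)-3/2)^2 * x^(2*k-4) := by
      simp only [wrB2, if_neg (show n ≠ 0 by omega)]
      have hneg : ((n:ℤ):ℝ) = -x := by simp only [hxdef]; try ring
      rw [hneg, Even.neg_pow ⟨k-2, by omega⟩]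
    have g2 : wrNu k (n-1) = (x*(x+1))^(k-1) := by
      simp only [wrNu]
      congr 1
      push_cast
      simp only [hxdef]; try ring
    have g3 : wrPsi k (n-1) = (Real.sqrt (x+1))^3 / (x+1)^k := by
      simp only [wrPsi, if_neg (show n-1 ≠ 0 by omega)]
      have : (((n-1).natAbs : ℕ) : ℝ) = x + 1 := by
        rw [wr_natAbs_cast, abs_of_nonpos (by push_cast; linarith)]
        push_cast; simp only [hxdef]; try ring
      rw [this]
    have g4 : wrNu k n * (wrPsi k n - wrPsi k (n+1))
        = ((x-1)*x)^(k-1) * ((Real.sqrt x)^3/x^k - (Real.sqrt (x-1))^3/(x-1)^k) := by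
      rcases eq_or_lt_of_le hn1 with h1 | h1
      · -- n = -1, both coefficients vanish
        have e1 : wrNu k n = 0 := by
          rw [h1]
          norm_num [wrNu, zero_pow hk1]
        have e2 : ((x-1)*x)^(k-1) = 0 := by
          have : x = 1 := by rw [hxdef, h1]; norm_num
          rw [this]
          norm_num [zero_pow hk1]
        rw [e1, e2]
        norm_num
      · -- n ≤ -2
        have hn2 : n ≤ -2 := by omega
        have e1 : wrNu k n = ((x-1)*x)^(k-1) := by
          simp only [wrNu]
          congr 1
          push_cast; simp only [hxdef]; try ring
        have e2 : wrPsi k (n+1) = (Real.sqrt (x-1))^3 / (x-1)^k := by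
          simp only [wrPsi, if_neg (show n+1 ≠ 0 by omega)]
          have : (((n+1).natAbs : ℕ) : ℝ) = x - 1 := by
            rw [wr_natAbs_cast, abs_of_nonpos (by push_cast; linarith [show (n:ℝ) ≤ -2 by exact_mod_cast hn2])]
            push_cast; simp only [hxdef]; try ring
          rw [this]
        rw [e1, e2, g1]
    rw [g4, g5, g1, g2, g3, add_comm]
    exact wr_core2x k hk x hx
  · -- n = 0
    subst hn
    have e1 : wrB2 k 0 = 0 := by simp [wrB2]
    have e2 : wrNu k 0 = 0 := by norm_num [wrNu, zero_pow hk1]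
    have e3 : wrNu k (0-1) = 0 := by norm_num [wrNu, zero_pow hk1]
    rw [e1, e2, e3]
    norm_num
  · -- n ≥ 1
    have hn1 : 1 ≤ n := hn
    have hnR : (1:ℝ) ≤ (n:ℝ) := by exact_mod_cast hn1
    set x : ℝ := (n:ℝ) with hxdef
    have hx : 1 ≤ x := hnR
    have hcast : ((n.natAbs : ℕ) : ℝ) = x := by
      rw [wr_natAbs_cast, abs_of_nonneg (by linarith)]
    have g1 : wrPsi k n = (Real.sqrt x)^3 / x^k := by
      simp only [wrPsi, if_neg (show n ≠ 0 by omega)]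
      rw [hcast]
    have g5 : wrB2 k n = ((k:ℝ)-3/2)^2 * x^(2*k-4) := by
      simp only [wrB2, if_neg (show n ≠ 0 by omega)]
      rfl
    have g2 : wrNu k n = (x*(x+1))^(k-1) := by
      simp only [wrNu]
      congr 1
      push_cast
      simp only [hxdef]; try ring
    have g3 : wrPsi k (n+1) = (Real.sqrt (x+1))^3 / (x+1)^k := by
      simp only [wrPsi, if_neg (show n+1 ≠ 0 by omega)]
      have : (((n+1).natAbs : ℕ) : ℝ) = x + 1 := by
        rw [wr_natAbs_cast, abs_of_nonneg (by push_cast; linarith)]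
        push_cast; simp only [hxdef]; try ring
      rw [this]
    have g4 : wrNu k (n-1) * (wrPsi k n - wrPsi k (n-1))
        = ((x-1)*x)^(k-1) * ((Real.sqrt x)^3/x^k - (Real.sqrt (x-1))^3/(x-1)^k) := by
      rcases eq_or_lt_of_le hn1 with h1 | h1
      · have e1 : wrNu k (n-1) = 0 := by
          rw [← h1]
          norm_num [wrNu, zero_pow hk1]
        have e2 : ((x-1)*x)^(k-1) = 0 := by
          have : x = 1 := by rw [hxdef, ← h1]; norm_num
          rw [this]
          norm_num [zero_pow hk1]
        rw [e1, e2]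
        norm_num
      · have hn2 : 2 ≤ n := by omega
        have e1 : wrNu k (n-1) = ((x-1)*x)^(k-1) := by
          simp only [wrNu]
          congr 1
          push_cast; simp only [hxdef]; try ring
        have e2 : wrPsi k (n-1) = (Real.sqrt (x-1))^3 / (x-1)^k := by
          simp only [wrPsi, if_neg (show n-1 ≠ 0 by omega)]
          have : (((n-1).natAbs : ℕ) : ℝ) = x - 1 := by
            rw [wr_natAbs_cast, abs_of_nonneg (by push_cast; linarith [show (2:ℝ) ≤ (n:ℝ) by exact_mod_cast hn2])]
            push_cast; simp only [hxdef]; try ring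
          rw [this]
        rw [e1, e2, g1]
    rw [g4, g5, g1, g2, g3]
    exact wr_core2x k hk x hx

theorem weighted_rellich_step
    (k : ℕ) (hk : 2 ≤ k) (u : ℤ → ℂ)
    (hu : (Function.support u).Finite) (h0 : u 0 = 0) :
    ∑' n : ℤ, ‖2 * u n - u (n + 1) - u (n - 1)‖ ^ 2 * (n : ℝ) ^ (2 * k) ≥
      (k : ℝ) * ((k : ℝ) - 1) * ((k : ℝ) - 3 / 2) ^ 2 *
        ∑' n : ℤ, ‖u n‖ ^ 2 * (n : ℝ) ^ (2 * k - 4) := by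
  have hkR : (2:ℝ) ≤ (k:ℝ) := by exact_mod_cast hk
  set d : ℤ → ℂ := fun m => u (m+1) - u m with hd
  -- finiteness of supports
  have hshift : ∀ c : ℤ, ((fun n : ℤ => n + c) ⁻¹' (support u)).Finite := fun c =>
    Set.Finite.preimage (Set.injOn_of_injective (fun a b h => by omega)) hu
  have hud : (support d).Finite := by
    apply Set.Finite.subset ((hshift 1).union hu)
    intro n hn
    by_contra hc
    simp only [Set.mem_union, Set.mem_preimage, mem_support, not_or, not_not] at hc
    exact hn (by simp [hd, hc.1, hc.2])
  have hdshift : ((fun n : ℤ => n + 1) ⁻¹' (support d)).Finite :=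
    Set.Finite.preimage (Set.injOn_of_injective (fun a b h => by omega)) hud
  -- step A : rewrite LHS
  set F : ℤ → ℝ := fun n => ‖d n - d (n-1)‖^2 * (n:ℝ)^(2*k) with hF
  have hA : (∑' n : ℤ, ‖2 * u n - u (n + 1) - u (n - 1)‖ ^ 2 * (n : ℝ) ^ (2 * k))
      = ∑' m : ℤ, ‖d (m+1) - d m‖^2 * (((m+1 : ℤ)) : ℝ)^(2*k) := by
    have e1 : ∀ n : ℤ, ‖2 * u n - u (n + 1) - u (n - 1)‖ ^ 2 * (n : ℝ) ^ (2 * k) = F n := by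
      intro n
      have e : 2 * u n - u (n+1) - u (n-1) = -(d n - d (n-1)) := by
        simp only [hd]
        rw [show n - 1 + 1 = n by ring]
        ring
      simp only [hF]
      rw [e, norm_neg]
    have e2 : ∀ m : ℤ, F (m+1) = ‖d (m+1) - d m‖^2 * (((m+1:ℤ)):ℝ)^(2*k) := by
      intro m
      simp only [hF, add_sub_cancel_right]
    have e3 : ∑' (c:ℤ), F ((Equiv.addRight (1:ℤ)) c) = ∑' n, F n :=
      (Equiv.addRight (1:ℤ)).tsum_eq F
    have e4 : ∀ c:ℤ, F ((Equiv.addRight (1:ℤ)) c) = ‖d (c+1) - d c‖^2 * (((c+1:ℤ)):ℝ)^(2*k) := by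
      intro c
      have h : ((Equiv.addRight (1:ℤ)) c) = c + 1 := rfl
      rw [h, e2]
    rw [tsum_congr e1, ← e3, tsum_congr e4]
  -- summabilities
  have memd : ∀ n : ℤ, (d n ≠ 0 ∨ d (n+1) ≠ 0) →
      n ∈ support d ∪ (fun n : ℤ => n + 1) ⁻¹' (support d) := by
    intro n hn
    rcases hn with h | h
    · exact Or.inl h
    · exact Or.inr h
  have S1 : Summable (fun m => wrW k m * ‖d (m+1) - d m‖^2) := by
    apply wr_summable _ (hud.union hdshift)
    intro n hn
    apply memd
    by_contra hc
    push_neg at hc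
    exact hn (by simp [hc.1, hc.2])
  have S2 : Summable (fun m => (4:ℝ)^k * (‖d (m+1) - d m‖^2 * (((m+1:ℤ)):ℝ)^(2*k))) := by
    apply wr_summable _ (hud.union hdshift)
    intro n hn
    apply memd
    by_contra hc
    push_neg at hc
    exact hn (by simp [hc.1, hc.2])
  -- step B : weight comparison
  have hB : ∑' m, wrW k m * ‖d (m+1) - d m‖^2
      ≤ (4:ℝ)^k * ∑' m, ‖d (m+1) - d m‖^2 * (((m+1:ℤ)):ℝ)^(2*k) := by
    rw [← tsum_mul_left]
    apply Summable.tsum_le_tsum _ S1 S2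
    intro m
    have hW : wrW k m ≤ (4:ℝ)^k * (((m+1:ℤ)):ℝ)^(2*k) := by
      have h1 : ((2*m+1)*(2*m+3)).toNat ≤ ((2*m+2)^2).toNat :=
        Int.toNat_le_toNat (by nlinarith)
      have h2 : (((((2*m+1)*(2*m+3)).toNat : ℕ)) : ℝ) ≤ ((((2*m+2)^2).toNat : ℕ) : ℝ) := by
        exact_mod_cast h1
      have h3 : ((((2*m+2)^2).toNat : ℕ) : ℝ) = (((2*m+2 : ℤ)):ℝ)^2 := by
        have := Int.toNat_of_nonneg (show (0:ℤ) ≤ (2*m+2)^2 by positivity)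
        have h4 : ((((2*m+2)^2).toNat : ℕ) : ℝ) = (((2*m+2)^2 : ℤ) : ℝ) := by
          exact_mod_cast congrArg (Int.cast : ℤ → ℝ) this
        rw [h4]; push_cast; ring
      have h5 : wrW k m ≤ ((((2*m+2 : ℤ)):ℝ)^2)^k := by
        simp only [wrW]
        apply pow_le_pow_left₀ (by positivity)
        rw [← h3]; exact h2
      refine le_trans h5 ?_
      have e : ((((2*m+2 : ℤ)):ℝ)^2)^k = (4:ℝ)^k * (((m+1:ℤ)):ℝ)^(2*k) := by
        rw [pow_mul, ← mul_pow]
        congr 1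
        push_cast; ring
      rw [e]
    have hN : (0:ℝ) ≤ ‖d (m+1) - d m‖^2 := by positivity
    calc wrW k m * ‖d (m+1) - d m‖^2
        ≤ ((4:ℝ)^k * (((m+1:ℤ)):ℝ)^(2*k)) * ‖d (m+1) - d m‖^2 :=
          mul_le_mul_of_nonneg_right hW hN
      _ = (4:ℝ)^k * (‖d (m+1) - d m‖^2 * (((m+1:ℤ)):ℝ)^(2*k)) := by ring
  -- GSR 1
  have hWnn : ∀ n, 0 ≤ wrW k n := fun n => by simp only [wrW]; positivity
  have hPhiPos : ∀ n, 0 < wrPhi k n := by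
    intro n
    simp only [wrPhi]
    have h1 : (2*n+1).natAbs ≠ 0 := by
      simp only [ne_eq, Int.natAbs_eq_zero]
      omega
    have h2 : (0:ℝ) < ((2*n+1).natAbs : ℝ) := by
      exact_mod_cast Nat.pos_of_ne_zero h1
    positivity
  have hGSR1 := wr_GSR (wrW k) (wrPhi k)
      (fun m => 4^k * ((k:ℝ)*((k:ℝ)-1)) * wrNu k m) d hud hWnn hPhiPos
      (fun n => wr_hB1 k hk n)
  -- step D : rewrite B1 sum
  have hD : ∑' n, (4^k * ((k:ℝ)*((k:ℝ)-1)) * wrNu k n) * ‖d n‖^2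
      = (4:ℝ)^k * ((k:ℝ)*((k:ℝ)-1)) * ∑' n, wrNu k n * ‖u (n+1) - u n‖^2 := by
    rw [← tsum_mul_left]
    apply tsum_congr
    intro n
    simp only [hd]
    ring
  -- GSR 2
  have hNunn : ∀ n, 0 ≤ wrNu k n := by
    intro n
    simp only [wrNu]
    apply pow_nonneg
    have : (0:ℤ) ≤ n*(n+1) := by
      rcases le_or_gt 0 n with h | h
      · exact mul_nonneg h (by omega)
      · have := mul_nonneg (show (0:ℤ) ≤ -n by omega) (show (0:ℤ) ≤ -(n+1) by omega)
        nlinarith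
    exact_mod_cast this
  have hPsiPos : ∀ n, 0 < wrPsi k n := by
    intro n
    simp only [wrPsi]
    rcases eq_or_ne n 0 with h | h
    · simp [h]
    · rw [if_neg h]
      have h1 : n.natAbs ≠ 0 := by simpa [Int.natAbs_eq_zero] using h
      have h2 : (0:ℝ) < (n.natAbs : ℝ) := by exact_mod_cast Nat.pos_of_ne_zero h1
      have h3 : 0 < Real.sqrt (n.natAbs) := Real.sqrt_pos.mpr h2
      positivity
  have hGSR2 := wr_GSR (wrNu k) (wrPsi k) (wrB2 k) u hu hNunn hPsiPos
      (fun n => wr_hB2 k hk n)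
  -- step F : rewrite B2 sum
  have hFeq : ∑' n, wrB2 k n * ‖u n‖^2
      = ((k:ℝ)-3/2)^2 * ∑' n : ℤ, ‖u n‖^2 * (n:ℝ)^(2*k-4) := by
    rw [← tsum_mul_left]
    apply tsum_congr
    intro n
    rcases eq_or_ne n 0 with h | h
    · subst h
      simp [wrB2, h0]
    · simp only [wrB2, if_neg h]
      ring
  -- assemble
  rw [ge_iff_le, ← mul_le_mul_iff_right₀ (show (0:ℝ) < (4:ℝ)^k by positivity)]
  have hc : (0:ℝ) ≤ (4:ℝ)^k * ((k:ℝ)*((k:ℝ)-1)) := by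
    apply mul_nonneg (by positivity)
    nlinarith
  calc (4:ℝ)^k * ((k:ℝ) * ((k:ℝ) - 1) * ((k:ℝ) - 3 / 2) ^ 2 *
        ∑' n : ℤ, ‖u n‖ ^ 2 * (n : ℝ) ^ (2 * k - 4))
      = ((4:ℝ)^k * ((k:ℝ)*((k:ℝ)-1))) * (((k:ℝ)-3/2)^2 * ∑' n : ℤ, ‖u n‖^2 * (n:ℝ)^(2*k-4)) := by
        ring
    _ = ((4:ℝ)^k * ((k:ℝ)*((k:ℝ)-1))) * ∑' n, wrB2 k n * ‖u n‖^2 := by rw [hFeq]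
    _ ≤ ((4:ℝ)^k * ((k:ℝ)*((k:ℝ)-1))) * ∑' n, wrNu k n * ‖u (n+1) - u n‖^2 :=
        mul_le_mul_of_nonneg_left hGSR2 hc
    _ = ∑' n, (4^k * ((k:ℝ)*((k:ℝ)-1)) * wrNu k n) * ‖d n‖^2 := hD.symm
    _ ≤ ∑' n, wrW k n * ‖d (n+1) - d n‖^2 := hGSR1
    _ ≤ (4:ℝ)^k * ∑' m, ‖d (m+1) - d m‖^2 * (((m+1:ℤ)):ℝ)^(2*k) := hB
    _ = (4:ℝ)^k * ∑' n : ℤ, ‖2 * u n - u (n + 1) - u (n - 1)‖ ^ 2 * (n : ℝ) ^ (2 * k) := by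
        rw [hA]
end
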